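/- Let $n \geq 1$ be an integer and let $Q \in \mathbb{C}[x,y,z]$ be defined by $Q = (x^2+y^2)S_n(z)S_{n-1}(z)^2 - xy\,S_{n-1}(z)\big(S_n(z)^2 + S_{n-1}(z)^2\big) + S_{3n}(z)$, where $S_k$ are the Chebyshev polynomials with $S_0=1$, $S_1(t)=t$, $S_{k+1}(t)=tS_k(t)-S_{k-1}(t)$. Then $Q$ is irreducible in $\mathbb{C}[x,y,z]$. -/

import Mathlib

section helpers
open Polynomial

theorem quad_irred {K : Type*} [Field K] (a b c : K) (ha : a ≠ 0)
    (h : ∀ s : K, s ^ 2 ≠ b ^ 2 - 4 * (a * c)) :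
    Irreducible (C a * X ^ 2 + C b * X + C c) := by
  set P : K[X] := C a * X ^ 2 + C b * X + C c with hP
  have hdeg : P.degree = 2 := Polynomial.degree_quadratic ha
  have hP0 : P ≠ 0 := fun h0 => by simp [h0] at hdeg
  constructor
  · intro hu
    rw [Polynomial.isUnit_iff_degree_eq_zero, hdeg] at hu
    norm_num at hu
  · intro f g hfg
    by_contra hcon
    push_neg at hcon
    obtain ⟨hf, hg⟩ := hcon
    have hf0 : f ≠ 0 := by rintro rfl; rw [zero_mul] at hfg; exact hP0 hfg
    have hg0 : g ≠ 0 := by rintro rfl; rw [mul_zero] at hfg; exact hP0 hfg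
    have hnd : f.natDegree + g.natDegree = 2 := by
      have h2 : P.natDegree = 2 := natDegree_quadratic ha
      rw [hfg, Polynomial.natDegree_mul hf0 hg0] at h2
      exact h2
    have key : ∀ u : K[X], u ≠ 0 → ¬IsUnit u → u.natDegree ≠ 0 := by
      intro u hu0 huU h0
      obtain ⟨v, hv⟩ := Polynomial.natDegree_eq_zero.mp h0
      have hv0 : v ≠ 0 := by rintro rfl; rw [← hv, map_zero] at hu0; exact hu0 rfl
      exact huU (hv ▸ Polynomial.isUnit_C.mpr hv0.isUnit)
    have hfd : f.natDegree = 1 := by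
      have := key f hf0 hf; have := key g hg0 hg; omega
    have hf1 : f.coeff 1 ≠ 0 := by
      have := Polynomial.leadingCoeff_ne_zero.mpr hf0
      rwa [Polynomial.leadingCoeff, hfd] at this
    set t : K := -(f.coeff 0) / (f.coeff 1) with htdef
    have hft : f.eval t = 0 := by
      conv_lhs => rw [Polynomial.eq_X_add_C_of_natDegree_le_one hfd.le]
      simp only [eval_add, eval_mul, eval_C, eval_X, htdef]
      field_simp
      ring
    have hPt : a * t ^ 2 + b * t + c = 0 := by
      have : P.eval t = 0 := by rw [hfg, eval_mul, hft, zero_mul]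
      simpa [hP] using this
    exact h (2 * a * t + b) (by linear_combination 4 * a * hPt)

theorem no_sq {A : Type*} [CommRing A] [IsDomain A] (h2 : (2 : A) ≠ 0)
    (Ac Cc : A) (hA : Ac ≠ 0) (hC : Cc ≠ 0) (d : Polynomial A) :
    d ^ 2 ≠ Polynomial.C Ac * Polynomial.X ^ 2 + Polynomial.C Cc := by
  intro hd
  have hdeg : (C Ac * X ^ 2 + C Cc : A[X]).natDegree = 2 := by
    have he : (C Ac * X ^ 2 + C Cc : A[X]) = C Ac * X ^ 2 + C (0 : A) * X + C Cc := by simp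
    rw [he]; exact natDegree_quadratic hA
  have h2d : 2 * d.natDegree = 2 := by
    rw [← Polynomial.natDegree_pow, hd, hdeg]
  have hd1 : d.natDegree = 1 := by omega
  have hde := Polynomial.eq_X_add_C_of_natDegree_le_one hd1.le
  set d1 := d.coeff 1 with hd1def
  set d0 := d.coeff 0 with hd0def
  rw [hde] at hd
  have expand : (C d1 * X + C d0) ^ 2 =
      C (d1 ^ 2) * X ^ 2 + C (2 * (d1 * d0)) * X + C (d0 ^ 2) := by
    simp only [map_mul, map_add, map_pow, map_ofNat]
    ring
  rw [expand] at hd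
  have e2 : d1 ^ 2 = Ac := by
    have := congrArg (fun p : Polynomial A => Polynomial.coeff p 2) hd
    simp only [Polynomial.coeff_add, Polynomial.coeff_C_mul, Polynomial.coeff_X_pow,
      Polynomial.coeff_C, Polynomial.coeff_X] at this
    norm_num at this
    exact this
  have hd1ne : d1 ≠ 0 := by
    intro h; rw [h] at e2; rw [← e2] at hA; simp at hA
  have hd0 : d0 = 0 := by
    have := congrArg (fun p : Polynomial A => Polynomial.coeff p 1) hd
    simp only [Polynomial.coeff_add, Polynomial.coeff_C_mul, Polynomial.coeff_X_pow,
      Polynomial.coeff_C, Polynomial.coeff_X] at this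
    norm_num at this
    rcases this with h | h | h
    · exact absurd h h2
    · exact absurd h hd1ne
    · exact h
  have e0 : d0 ^ 2 = Cc := by
    have := congrArg (fun p : Polynomial A => Polynomial.coeff p 0) hd
    simp only [Polynomial.coeff_add, Polynomial.coeff_C_mul, Polynomial.coeff_X_pow,
      Polynomial.coeff_C, Polynomial.coeff_X] at this
    norm_num at this
    exact this
  rw [hd0] at e0
  exact hC (by rw [← e0]; ring)

end helpers

section S
open Polynomial
variable (S : ℤ → Polynomial ℂ) (hS0 : S 0 = 1) (hS1 : S 1 = Polynomial.X)
  (hS : ∀ k : ℤ, S (k + 1) = Polynomial.X * S k - S (k - 1))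
include hS0 hS1 hS

theorem Sneg : S (-1) = 0 := by
  have h := hS 0
  norm_num at h
  rw [hS0, hS1] at h
  linear_combination h

theorem Srec (k : ℤ) : S (k + 2) = Polynomial.X * S (k + 1) - S k := by
  have h := hS (k + 1)
  rw [show k + 1 + 1 = k + 2 by ring, show k + 1 - 1 = k by ring] at h
  exact h

theorem Smono : ∀ m : ℕ, ((S m).Monic ∧ (S m).degree = m) ∧
    ((S (m + 1)).Monic ∧ (S (m + 1)).degree = (m + 1 : ℕ)) := by
  intro m
  induction m with
  | zero =>
    refine ⟨⟨?_, ?_⟩, ?_, ?_⟩ <;> simp [hS0, hS1, monic_one, monic_X]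
  | succ k ih =>
    have hc1 : ((k + 1 : ℕ) : ℤ) = (k : ℤ) + 1 := by push_cast; ring
    have hc2 : ((k + 2 : ℕ) : ℤ) = (k : ℤ) + 2 := by push_cast; ring
    refine ⟨ih.2, ?_, ?_⟩
    · push_cast
      rw [show ((k:ℤ) + 1 + 1) = (k:ℤ) + 2 by ring, Srec S hS0 hS1 hS k,
        sub_eq_add_neg]
      apply Polynomial.Monic.add_of_left (monic_X.mul ih.2.1)
      rw [degree_neg, degree_mul, degree_X, ih.1.2, ih.2.2]
      exact_mod_cast Nat.cast_lt.mpr (by omega : k < 1 + (k + 1))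
    · push_cast
      rw [show ((k:ℤ) + 1 + 1) = (k:ℤ) + 2 by ring, Srec S hS0 hS1 hS k,
        sub_eq_add_neg]
      rw [degree_add_eq_left_of_degree_lt, degree_mul, degree_X, ih.2.2]
      · push_cast
        rw [show ((1:WithBot ℕ) + ((k:WithBot ℕ) + 1)) = (k:WithBot ℕ) + 1 + 1 by ring]
      · rw [degree_neg, degree_mul, degree_X, ih.1.2, ih.2.2]
        exact_mod_cast Nat.cast_lt.mpr (by omega : k < 1 + (k + 1))

theorem Scop : ∀ m : ℕ, IsCoprime (S m) (S ((m : ℤ) + 1)) := by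
  intro m
  induction m with
  | zero => rw [show ((0:ℕ):ℤ) = 0 by norm_num, show (0:ℤ)+1 = 1 by norm_num, hS0, hS1]
            exact isCoprime_one_left
  | succ k ih =>
    have hc1 : ((k + 1 : ℕ) : ℤ) = (k : ℤ) + 1 := by push_cast; ring
    rw [hc1]
    rw [show ((k:ℤ) + 1 + 1) = (k:ℤ) + 2 by ring, Srec S hS0 hS1 hS k]
    have h1 : IsCoprime (S ((k:ℤ) + 1)) (-S (k:ℤ)) := ih.symm.neg_right
    have h2 := h1.add_mul_left_right Polynomial.X
    rw [show -S (k:ℤ) + S ((k:ℤ)+1) * Polynomial.X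
        = Polynomial.X * S ((k:ℤ)+1) - S (k:ℤ) by ring] at h2
    exact h2

theorem Sadd : ∀ (a : ℤ) (b : ℕ),
    S (a + b) = S a * S b - S (a - 1) * S ((b : ℤ) - 1) ∧
    S (a + b + 1) = S a * S ((b:ℤ) + 1) - S (a - 1) * S (b : ℤ) := by
  intro a b
  induction b with
  | zero =>
    constructor
    · norm_num [hS0, Sneg S hS0 hS1 hS]
    · norm_num [hS0, hS1]
      have h := hS a
      linear_combination h
  | succ k ih =>
    have hc1 : ((k + 1 : ℕ) : ℤ) = (k : ℤ) + 1 := by push_cast; ring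
    obtain ⟨ih0, ih1⟩ := ih
    constructor
    · rw [hc1, show a + ((k:ℤ) + 1) = a + (k:ℤ) + 1 by ring,
        show (k:ℤ) + 1 - 1 = (k:ℤ) by ring]
      exact ih1
    · rw [hc1, show a + ((k:ℤ) + 1) + 1 = (a + (k:ℤ)) + 2 by ring,
        show (k:ℤ) + 1 + 1 = (k:ℤ) + 2 by ring]
      have hA := Srec S hS0 hS1 hS (a + (k:ℤ))
      have hB := Srec S hS0 hS1 hS (k:ℤ)
      have hC := hS (k:ℤ)
      linear_combination hA + Polynomial.X * ih1 - ih0 - S a * hB + S (a-1) * hC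

theorem Scop3 (N : ℕ) : IsCoprime (S (N:ℤ)) (S (3 * (N:ℤ) + 3)) := by
  have h1 := Scop S hS0 hS1 hS N
  have e2 := (Sadd S hS0 hS1 hS ((N:ℤ) + 1) (N + 1)).1
  have e3 := (Sadd S hS0 hS1 hS (2*(N:ℤ) + 2) (N + 1)).1
  have hc1 : ((N + 1 : ℕ) : ℤ) = (N : ℤ) + 1 := by push_cast; ring
  rw [hc1, show (N:ℤ) + 1 + ((N:ℤ) + 1) = 2*(N:ℤ)+2 by ring,
    show (N:ℤ) + 1 - 1 = (N:ℤ) by ring] at e2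
  rw [hc1, show 2*(N:ℤ) + 2 + ((N:ℤ) + 1) = 3*(N:ℤ)+3 by ring,
    show 2*(N:ℤ) + 2 - 1 = 2*(N:ℤ)+1 by ring, show (N:ℤ) + 1 - 1 = (N:ℤ) by ring] at e3
  have hq2 : IsCoprime (S (N:ℤ)) (S (2*(N:ℤ)+2)) := by
    rw [e2]
    have := (h1.mul_right h1).add_mul_left_right (-S (N:ℤ))
    rw [show S ((N:ℤ)+1) * S ((N:ℤ)+1) + S (N:ℤ) * -S (N:ℤ)
      = S ((N:ℤ)+1) * S ((N:ℤ)+1) - S (N:ℤ) * S (N:ℤ) by ring] at this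
    exact this
  rw [e3]
  have := (hq2.mul_right h1).add_mul_left_right (-S (2*(N:ℤ)+1))
  rw [show S (2*(N:ℤ)+2) * S ((N:ℤ)+1) + S (N:ℤ) * -S (2*(N:ℤ)+1)
    = S (2*(N:ℤ)+2) * S ((N:ℤ)+1) - S (2*(N:ℤ)+1) * S (N:ℤ) by ring] at this
  exact this

end S

set_option maxHeartbeats 1000000 in
open MvPolynomial in
theorem stmt_17 (S : ℤ → Polynomial ℂ) (hS0 : S 0 = 1) (hS1 : S 1 = Polynomial.X)
    (hS : ∀ k : ℤ, S (k + 1) = Polynomial.X * S k - S (k - 1))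
    (n : ℤ) (hn : 1 ≤ n)
    (x y z : MvPolynomial (Fin 3) ℂ) (hx : x = X 0) (hy : y = X 1) (hz : z = X 2)
    (Q : MvPolynomial (Fin 3) ℂ)
    (hQ : Q = (x ^ 2 + y ^ 2) * Polynomial.aeval z (S n) * (Polynomial.aeval z (S (n - 1))) ^ 2
      - x * y * Polynomial.aeval z (S (n - 1)) *
          ((Polynomial.aeval z (S n)) ^ 2 + (Polynomial.aeval z (S (n - 1))) ^ 2)
      + Polynomial.aeval z (S (3 * n))) :
    Irreducible Q := by
  obtain ⟨N, rfl⟩ : ∃ N : ℕ, n = (N : ℤ) + 1 := ⟨(n - 1).toNat, by omega⟩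
  subst hx hy hz
  rw [show (N:ℤ) + 1 - 1 = (N:ℤ) by ring, show 3*((N:ℤ)+1) = 3*(N:ℤ)+3 by ring] at hQ
  set e3 := MvPolynomial.finSuccEquiv ℂ 2 with he3
  set e2 := MvPolynomial.finSuccEquiv ℂ 1 with he2
  -- basic images
  have hX2 : e3 (X 2 : MvPolynomial (Fin 3) ℂ) = Polynomial.C (X 1) := by
    rw [show (2 : Fin 3) = Fin.succ 1 from rfl, MvPolynomial.finSuccEquiv_X_succ]
  have hX1 : e3 (X 1 : MvPolynomial (Fin 3) ℂ) = Polynomial.C (X 0) := by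
    rw [show (1 : Fin 3) = Fin.succ 0 from rfl, MvPolynomial.finSuccEquiv_X_succ]
  have hX0 : e3 (X 0 : MvPolynomial (Fin 3) ℂ) = Polynomial.X :=
    MvPolynomial.finSuccEquiv_X_zero
  have hX0' : e2 (X 0 : MvPolynomial (Fin 2) ℂ) = Polynomial.X :=
    MvPolynomial.finSuccEquiv_X_zero
  have hCstep : ∀ {A : Type} [CommRing A] [Algebra ℂ A] (w : A) (f : Polynomial ℂ),
      Polynomial.aeval (Polynomial.C w) f = Polynomial.C (Polynomial.aeval w f) := by
    intro A _ _ w f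
    have h := Polynomial.aeval_algHom_apply (IsScalarTower.toAlgHom ℂ A (Polynomial A)) w f
    simpa [Polynomial.algebraMap_eq] using h
  have hkey3 : ∀ f : Polynomial ℂ, e3 (Polynomial.aeval (X 2 : MvPolynomial (Fin 3) ℂ) f)
      = Polynomial.C (Polynomial.aeval (X 1 : MvPolynomial (Fin 2) ℂ) f) := by
    intro f
    rw [← Polynomial.aeval_algHom_apply e3 (X 2 : MvPolynomial (Fin 3) ℂ) f, hX2, hCstep]
  have hkey2 : ∀ f : Polynomial ℂ, e2 (Polynomial.aeval (X 1 : MvPolynomial (Fin 2) ℂ) f)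
      = Polynomial.C (Polynomial.aeval (X 0 : MvPolynomial (Fin 1) ℂ) f) := by
    intro f
    rw [← Polynomial.aeval_algHom_apply e2 (X 1 : MvPolynomial (Fin 2) ℂ) f,
      show (1 : Fin 2) = Fin.succ 0 from rfl, MvPolynomial.finSuccEquiv_X_succ, hCstep]
  -- the coefficients
  set p : MvPolynomial (Fin 2) ℂ := Polynomial.aeval (X 1) (S ((N:ℤ)+1)) with hp_def
  set q : MvPolynomial (Fin 2) ℂ := Polynomial.aeval (X 1) (S (N:ℤ)) with hq_def
  set s3 : MvPolynomial (Fin 2) ℂ := Polynomial.aeval (X 1) (S (3*(N:ℤ)+3)) with hs3_def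
  set a : MvPolynomial (Fin 2) ℂ := p * q^2 with ha_def
  set b : MvPolynomial (Fin 2) ℂ := -(X 0 * (q * (p^2 + q^2))) with hb_def
  set c : MvPolynomial (Fin 2) ℂ := X 0^2 * (p*q^2) + s3 with hc_def
  have hQe : e3 Q = Polynomial.C a * Polynomial.X^2 + Polynomial.C b * Polynomial.X
      + Polynomial.C c := by
    rw [hQ, ha_def, hb_def, hc_def]
    simp only [map_add, map_sub, map_mul, map_pow, map_neg, hkey3, hX0, hX1,
      Polynomial.C_mul, Polynomial.C_add, Polynomial.C_neg, Polynomial.C_pow]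
    ring
  -- retraction MvPolynomial (Fin 2) ℂ → ℂ[X] killing X 0
  set ρ : MvPolynomial (Fin 2) ℂ →ₐ[ℂ] Polynomial ℂ :=
    MvPolynomial.aeval ![0, Polynomial.X] with hρ_def
  have hρX1 : ρ (X 1) = Polynomial.X := by simp [hρ_def]
  have hρX0 : ρ (X 0) = 0 := by simp [hρ_def]
  have hρ : ∀ f : Polynomial ℂ, ρ (Polynomial.aeval (X 1 : MvPolynomial (Fin 2) ℂ) f) = f := by
    intro f
    rw [← Polynomial.aeval_algHom_apply ρ (X 1 : MvPolynomial (Fin 2) ℂ) f, hρX1,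
      Polynomial.aeval_X_left_apply]
  -- retraction MvPolynomial (Fin 1) ℂ → ℂ[X]
  set ρ1 : MvPolynomial (Fin 1) ℂ →ₐ[ℂ] Polynomial ℂ :=
    MvPolynomial.aeval (fun _ => Polynomial.X) with hρ1_def
  have hρ1 : ∀ f : Polynomial ℂ, ρ1 (Polynomial.aeval (X 0 : MvPolynomial (Fin 1) ℂ) f) = f := by
    intro f
    rw [← Polynomial.aeval_algHom_apply ρ1 (X 0 : MvPolynomial (Fin 1) ℂ) f]
    simp [hρ1_def, Polynomial.aeval_X_left_apply]
  -- nonvanishing of the Chebyshev polynomials involved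
  have hSN : (S (N:ℤ)).Monic := (Smono S hS0 hS1 hS N).1.1
  have hSN1 : (S ((N:ℤ)+1)).Monic := (Smono S hS0 hS1 hS N).2.1
  have hS3N : (S (3*(N:ℤ)+3)).Monic := by
    have h := (Smono S hS0 hS1 hS (3*N+2)).2.1
    rwa [show ((3*N+2 : ℕ):ℤ) + 1 = 3*(N:ℤ)+3 by push_cast; ring] at h
  have hρp : ρ p = S ((N:ℤ)+1) := hρ _
  have hρq : ρ q = S (N:ℤ) := hρ _
  have hρs3 : ρ s3 = S (3*(N:ℤ)+3) := hρ _
  have hp0 : p ≠ 0 := fun h => hSN1.ne_zero (by rw [← hρp, h, map_zero])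
  have hq0 : q ≠ 0 := fun h => hSN.ne_zero (by rw [← hρq, h, map_zero])
  have hs30 : s3 ≠ 0 := fun h => hS3N.ne_zero (by rw [← hρs3, h, map_zero])
  have ha0 : a ≠ 0 := by rw [ha_def]; exact mul_ne_zero hp0 (pow_ne_zero 2 hq0)
  -- coprimality transported
  have hqp : IsCoprime q p := by
    have h := (Scop S hS0 hS1 hS N).map
      (Polynomial.aeval (X 1 : MvPolynomial (Fin 2) ℂ) : Polynomial ℂ →ₐ[ℂ] _).toRingHom
    exact h
  have hqs3 : IsCoprime q s3 := by
    have h := (Scop3 S hS0 hS1 hS N).map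
      (Polynomial.aeval (X 1 : MvPolynomial (Fin 2) ℂ) : Polynomial ℂ →ₐ[ℂ] _).toRingHom
    exact h
  -- X 0 is prime
  have hX0prime : Prime (X 0 : MvPolynomial (Fin 2) ℂ) := by
    rw [← MulEquiv.prime_iff e2.toMulEquiv]
    show Prime (e2 (X 0))
    rw [MvPolynomial.finSuccEquiv_X_zero]
    exact Polynomial.prime_X
  -- primitivity
  have hprim : (Polynomial.C a * Polynomial.X^2 + Polynomial.C b * Polynomial.X
      + Polynomial.C c : Polynomial (MvPolynomial (Fin 2) ℂ)).IsPrimitive := by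
    intro r hr
    by_contra hru
    have hdv := (Polynomial.C_dvd_iff_dvd_coeff r _).mp hr
    have hra : r ∣ a := by
      have h2 := hdv 2
      simp only [Polynomial.coeff_add, Polynomial.coeff_C_mul, Polynomial.coeff_X_pow,
        Polynomial.coeff_C, Polynomial.coeff_X] at h2
      norm_num at h2
      exact h2
    have hrb : r ∣ b := by
      have h1 := hdv 1
      simp only [Polynomial.coeff_add, Polynomial.coeff_C_mul, Polynomial.coeff_X_pow,
        Polynomial.coeff_C, Polynomial.coeff_X] at h1
      norm_num at h1
      exact h1
    have hrc : r ∣ c := by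
      have h0 := hdv 0
      simp only [Polynomial.coeff_add, Polynomial.coeff_C_mul, Polynomial.coeff_X_pow,
        Polynomial.coeff_C, Polynomial.coeff_X] at h0
      norm_num at h0
      exact h0
    have hr0 : r ≠ 0 := by rintro rfl; exact ha0 (zero_dvd_iff.mp hra)
    obtain ⟨π, hπirr, hπr⟩ := WfDvdMonoid.exists_irreducible_factor hru hr0
    have hπ : Prime π := UniqueFactorizationMonoid.irreducible_iff_prime.mp hπirr
    have hπa : π ∣ a := hπr.trans hra
    have hπb : π ∣ b := hπr.trans hrb
    have hπc : π ∣ c := hπr.trans hrc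
    have hqcase : ¬ π ∣ q := by
      intro hq'
      have hterm : π ∣ X 0^2 * (p*q^2) :=
        Dvd.dvd.mul_left (Dvd.dvd.mul_left (hq'.trans (dvd_pow_self q two_ne_zero)) p) (X 0^2)
      have hπs3 : π ∣ s3 := by
        have h' := dvd_sub hπc hterm
        rwa [show c - X 0^2*(p*q^2) = s3 from by rw [hc_def]; ring] at h'
      exact hπ.not_unit (hqs3.isUnit_of_dvd' hq' hπs3)
    have hπa' : π ∣ p * q^2 := by rwa [ha_def] at hπa
    rcases hπ.2.2 p (q^2) hπa' with hπp | hπq2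
    · have hb' : π ∣ X 0 * (q * (p^2+q^2)) := by
        rw [hb_def] at hπb
        exact dvd_neg.mp hπb
      rcases hπ.2.2 _ _ hb' with hπx | hπrest
      · have hass := hπirr.associated_of_dvd hX0prime.irreducible hπx
        have hX0p : (X 0 : MvPolynomial (Fin 2) ℂ) ∣ p := hass.symm.dvd.trans hπp
        obtain ⟨w, hw⟩ := hX0p
        have hcon := congrArg ρ hw
        rw [hρp, map_mul, hρX0, zero_mul] at hcon
        exact hSN1.ne_zero hcon
      · rcases hπ.2.2 _ _ hπrest with hπq | hπpq
        · exact hqcase hπq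
        · have hq2 : π ∣ q^2 := by
            have h' := dvd_sub hπpq (hπp.trans (dvd_pow_self p two_ne_zero))
            rwa [show p^2 + q^2 - p^2 = q^2 by ring] at h'
          exact hqcase (hπ.dvd_of_dvd_pow hq2)
    · exact hqcase (hπ.dvd_of_dvd_pow hπq2)
  -- pass to the fraction field
  set K := FractionRing (MvPolynomial (Fin 2) ℂ) with hK
  set i := algebraMap (MvPolynomial (Fin 2) ℂ) K with hi
  have hiinj : Function.Injective i := IsFractionRing.injective _ _
  have hmap : (Polynomial.C a * Polynomial.X^2 + Polynomial.C b * Polynomial.X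
      + Polynomial.C c : Polynomial (MvPolynomial (Fin 2) ℂ)).map i
      = Polynomial.C (i a) * Polynomial.X^2 + Polynomial.C (i b) * Polynomial.X
        + Polynomial.C (i c) := by
    simp [Polynomial.map_add, Polynomial.map_mul, Polynomial.map_pow, Polynomial.map_C,
      Polynomial.map_X]
  have hia0 : i a ≠ 0 := fun h => ha0 (hiinj (by rw [h, map_zero]))
  -- discriminant is not a square
  set D : MvPolynomial (Fin 2) ℂ := X 0^2 * (p^2 - q^2)^2 - 4*(p*s3) with hD_def
  have hdis : ∀ s : K, s ^ 2 ≠ (i b) ^ 2 - 4 * (i a * i c) := by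
    intro s hs
    have hfac : (b^2 - 4*(a*c) : MvPolynomial (Fin 2) ℂ) = q^2 * D := by
      rw [ha_def, hb_def, hc_def, hD_def]; ring
    have hs2 : s ^ 2 = i q ^ 2 * i D := by
      rw [hs]
      rw [show (i b)^2 - 4*(i a * i c) = i (b^2 - 4*(a*c)) from by
        simp only [map_sub, map_mul, map_pow, map_ofNat]]
      rw [hfac, map_mul, map_pow]
    have hiq : i q ≠ 0 := fun h => hq0 (hiinj (by rw [h, map_zero]))
    set t : K := s / i q with ht_def
    have ht2 : t ^ 2 = i D := by
      rw [ht_def, div_pow, hs2, mul_div_cancel_left₀ _ (pow_ne_zero 2 hiq)]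
    have hint : IsIntegral (MvPolynomial (Fin 2) ℂ) t := by
      refine ⟨Polynomial.X^2 - Polynomial.C D, Polynomial.monic_X_pow_sub_C D (by norm_num), ?_⟩
      rw [Polynomial.eval₂_sub, Polynomial.eval₂_C, Polynomial.eval₂_pow, Polynomial.eval₂_X,
        ht2, hi, sub_self]
    obtain ⟨d, hd⟩ := IsIntegrallyClosed.isIntegral_iff.mp hint
    have hdD : d ^ 2 = D := hiinj (by rw [map_pow, hd, ht2])
    -- transport to Polynomial (MvPolynomial (Fin 1) ℂ) and contradict
    set p1 : MvPolynomial (Fin 1) ℂ := Polynomial.aeval (X 0) (S ((N:ℤ)+1)) with hp1_def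
    set q1 : MvPolynomial (Fin 1) ℂ := Polynomial.aeval (X 0) (S (N:ℤ)) with hq1_def
    set s31 : MvPolynomial (Fin 1) ℂ := Polynomial.aeval (X 0) (S (3*(N:ℤ)+3)) with hs31_def
    have he2D : e2 D = Polynomial.C ((p1^2 - q1^2)^2) * Polynomial.X^2
        + Polynomial.C (-(4*(p1*s31))) := by
      rw [hD_def, hp_def, hq_def, hs3_def, hp1_def, hq1_def, hs31_def]
      simp only [map_sub, map_mul, map_pow, map_add, map_neg, map_ofNat, hkey2, hX0',
        Polynomial.C_mul, Polynomial.C_add,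
        Polynomial.C_neg, Polynomial.C_pow, Polynomial.C_sub]
      ring
    have h2ne : (2 : MvPolynomial (Fin 1) ℂ) ≠ 0 := by
      intro h
      have hcon := congrArg ρ1 h
      simp only [map_ofNat, map_zero] at hcon
      norm_num at hcon
    have hρ1p1 : ρ1 p1 = S ((N:ℤ)+1) := hρ1 _
    have hρ1q1 : ρ1 q1 = S (N:ℤ) := hρ1 _
    have hρ1s31 : ρ1 s31 = S (3*(N:ℤ)+3) := hρ1 _
    have hAne : ((p1^2 - q1^2)^2 : MvPolynomial (Fin 1) ℂ) ≠ 0 := by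
      apply pow_ne_zero
      intro h
      have hcon := congrArg ρ1 h
      simp only [map_sub, map_pow, map_zero, hρ1p1, hρ1q1] at hcon
      have heq : (S ((N:ℤ)+1))^2 = (S (N:ℤ))^2 := by linear_combination hcon
      have hdeg := congrArg Polynomial.natDegree heq
      rw [Polynomial.natDegree_pow, Polynomial.natDegree_pow,
        Polynomial.natDegree_eq_of_degree_eq_some (Smono S hS0 hS1 hS N).1.2,
        Polynomial.natDegree_eq_of_degree_eq_some (Smono S hS0 hS1 hS N).2.2] at hdeg
      omega
    have hCne : (-(4*(p1*s31)) : MvPolynomial (Fin 1) ℂ) ≠ 0 := by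
      intro h
      have hcon := congrArg ρ1 h
      simp only [map_neg, map_mul, map_ofNat, map_zero, hρ1p1, hρ1s31, neg_eq_zero] at hcon
      rcases mul_eq_zero.mp hcon with h' | h'
      · norm_num at h'
      · rcases mul_eq_zero.mp h' with h'' | h''
        · exact hSN1.ne_zero h''
        · exact hS3N.ne_zero h''
    apply no_sq h2ne _ _ hAne hCne (e2 d)
    rw [← map_pow, hdD, he2D]
  -- assemble
  have hirrK : Irreducible ((Polynomial.C a * Polynomial.X^2 + Polynomial.C b * Polynomial.X
      + Polynomial.C c : Polynomial (MvPolynomial (Fin 2) ℂ)).map i) := by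
    rw [hmap]
    exact quad_irred (i a) (i b) (i c) hia0 hdis
  have hirrP := hprim.irreducible_of_irreducible_map_of_injective hiinj hirrK
  rw [← hQe] at hirrP
  exact (MulEquiv.irreducible_iff e3).mp hirrP
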